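/- (Proposition: Layer Normalization is responsible for boundary values.) Let d ≥ 1, let u, w ∈ ℝ^d with Var(u) > 0, and let v : ℝ → ℝ^d satisfy v(x) − (x·u + w) → 0 as x → +∞. Then for any gain ρ ∈ ℝ^d and bias ε ∈ ℝ^d, the Layer Normalization output converges to a constant vector: LN(v(x)) → ((u − mean(u)·𝟙)/√(Var(u))) ⊙ ρ + ε as x → +∞. -/

import Mathlib

open Filter Real

/-- Coordinate mean `mean(v) = (1/d) ∑ᵢ vᵢ` of a vector in ℝ^d. -/
noncomputable def vecMean {d : ℕ} (v : EuclideanSpace ℝ (Fin d)) : ℝ :=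
  (∑ i, v i) / d

/-- Coordinate variance `Var(v) = (1/d) ∑ᵢ (vᵢ − mean(v))²` of a vector in ℝ^d. -/
noncomputable def vecVar {d : ℕ} (v : EuclideanSpace ℝ (Fin d)) : ℝ :=
  (∑ i, (v i - vecMean v) ^ 2) / d

/-- Layer Normalization with gain `ρ` and bias `ε`:
`LN(v) = ((v − mean(v)·𝟙)/√Var(v)) ⊙ ρ + ε` (entrywise). -/
noncomputable def layerNorm {d : ℕ} (ρ ε : EuclideanSpace ℝ (Fin d))
    (v : EuclideanSpace ℝ (Fin d)) : EuclideanSpace ℝ (Fin d) :=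
  WithLp.toLp 2 (fun i => (v i - vecMean v) / Real.sqrt (vecVar v) * ρ i + ε i)

theorem stmt_10 (d : ℕ) (hd : 1 ≤ d) (u w : EuclideanSpace ℝ (Fin d))
    (hu : 0 < vecVar u)
    (v : ℝ → EuclideanSpace ℝ (Fin d))
    (hv : Filter.Tendsto (fun x : ℝ => v x - (x • u + w)) Filter.atTop (nhds 0))
    (ρ ε : EuclideanSpace ℝ (Fin d)) :
    Filter.Tendsto (fun x : ℝ => layerNorm ρ ε (v x)) Filter.atTop
      (nhds (WithLp.toLp 2 (fun i => (u i - vecMean u) / Real.sqrt (vecVar u) * ρ i + ε i))) := by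
  have hd0 : (0:ℝ) < (d:ℝ) := by exact_mod_cast hd
  -- coordinatewise error
  have he : ∀ i, Tendsto (fun x : ℝ => v x i - (x * u i + w i)) atTop (nhds 0) := by
    intro i
    have h := ((PiLp.continuous_apply 2 _ i).tendsto (0 : EuclideanSpace ℝ (Fin d))).comp hv
    simpa [Function.comp_def] using h
  -- mean error
  have hm : Tendsto (fun x : ℝ => vecMean (v x) - (x * vecMean u + vecMean w))
      atTop (nhds 0) := by
    have hsum : Tendsto (fun x : ℝ => (∑ i, (v x i - (x * u i + w i))) / d)
        atTop (nhds 0) := by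
      simpa using (tendsto_finset_sum _ (fun i _ => he i)).div_const (d:ℝ)
    have : ∀ x : ℝ, vecMean (v x) - (x * vecMean u + vecMean w)
        = (∑ i, (v x i - (x * u i + w i))) / d := by
      intro x
      simp only [vecMean, Finset.sum_sub_distrib, Finset.sum_add_distrib,
        ← Finset.mul_sum]
      field_simp
    exact hsum.congr (fun x => (this x).symm)
  -- centered coordinate limits
  have hB : ∀ i, Tendsto (fun x : ℝ => (v x i - vecMean (v x)) / x) atTop
      (nhds (u i - vecMean u)) := by
    intro i
    have hg : Tendsto (fun x : ℝ => (v x i - vecMean (v x))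
        - (x * (u i - vecMean u) + (w i - vecMean w))) atTop (nhds 0) := by
      have h := (he i).sub hm
      simp only [sub_zero] at h
      exact h.congr fun x => by ring
    have h0 : Tendsto (fun x : ℝ => (w i - vecMean w) +
        ((v x i - vecMean (v x)) - (x * (u i - vecMean u) + (w i - vecMean w))))
        atTop (nhds (w i - vecMean w)) := by
      simpa using tendsto_const_nhds.add hg
    have h1 := h0.div_atTop tendsto_id
    have h2 := h1.const_add (u i - vecMean u)
    rw [add_zero] at h2
    refine h2.congr' ?_
    filter_upwards [eventually_ne_atTop (0:ℝ)] with x hx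
    simp only [id]
    field_simp
    ring
  -- variance limit
  have hVar : Tendsto (fun x : ℝ => vecVar (v x) / x ^ 2) atTop (nhds (vecVar u)) := by
    have hsum : Tendsto (fun x : ℝ => (∑ i, ((v x i - vecMean (v x)) / x) ^ 2) / d)
        atTop (nhds ((∑ i, (u i - vecMean u) ^ 2) / d)) :=
      (tendsto_finset_sum _ (fun i _ => (hB i).pow 2)).div_const d
    rw [show vecVar u = (∑ i, (u i - vecMean u) ^ 2) / d from rfl]
    refine hsum.congr' ?_
    filter_upwards [eventually_ne_atTop (0:ℝ)] with x hx
    simp only [vecVar, div_pow, Finset.sum_div]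
    exact Finset.sum_congr rfl fun i _ => by rw [div_div, div_div, mul_comm]
  -- nonnegativity of variance
  have hVnn : ∀ x : ℝ, 0 ≤ vecVar (v x) := by
    intro x
    apply div_nonneg _ hd0.le
    exact Finset.sum_nonneg fun i _ => sq_nonneg _
  -- sqrt limit
  have hS : Tendsto (fun x : ℝ => Real.sqrt (vecVar (v x)) / x) atTop
      (nhds (Real.sqrt (vecVar u))) := by
    have h := (Real.continuous_sqrt.tendsto (vecVar u)).comp hVar
    refine h.congr' ?_
    filter_upwards [eventually_gt_atTop (0:ℝ)] with x hx
    simp only [Function.comp]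
    rw [Real.sqrt_div (hVnn x), Real.sqrt_sq hx.le]
  have hSne : Real.sqrt (vecVar u) ≠ 0 := by positivity
  -- coordinatewise final limit
  have hfin : ∀ i, Tendsto (fun x : ℝ =>
      (v x i - vecMean (v x)) / Real.sqrt (vecVar (v x)) * ρ i + ε i) atTop
      (nhds ((u i - vecMean u) / Real.sqrt (vecVar u) * ρ i + ε i)) := by
    intro i
    have h := ((hB i).div hS hSne).mul_const (ρ i) |>.add_const (ε i)
    refine h.congr' ?_
    filter_upwards [eventually_ne_atTop (0:ℝ)] with x hx
    congr 1
    congr 1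
    by_cases hs : Real.sqrt (vecVar (v x)) = 0
    · simp [hs]
    · simp only [Pi.div_apply]
      field_simp
  -- assemble
  refine ((PiLp.continuous_toLp 2 _).tendsto _).comp ?_
  rw [tendsto_pi_nhds]
  intro i
  exact hfin i
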